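/- Let (T_{s,t})_{0 ≤ s ≤ t ≤ T} be an evolution system on B, fix 0 < s < T and f ∈ B, and assume f ∈ D(A_u⁺) for every u ∈ [s,T). Then for every t with s < t < T the forward equation holds: the map r ↦ T_{s,r} f has right derivative at r = t equal to T_{s,t}(A_t⁺ f). -/
import Mathlib


open Set Filter Topology

/-- Forward equation for right generators of an evolution system (Theorem 1.1(2)).
If `f ∈ D(A_u⁺)` for all `u ∈ [s,T)` (with `A_u⁺ f = Af u` given by the defining limit),
then for every `t ∈ (s,T)` the map `r ↦ E s r f` has right derivative `E s t (Af t)` at `t`. -/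
theorem forward_equation_right
    {B : Type*} [NormedAddCommGroup B] [NormedSpace ℝ B] [CompleteSpace B]
    (T : ℝ) (E : ℝ → ℝ → B →L[ℝ] B)
    (hid : ∀ s : ℝ, 0 ≤ s → s ≤ T → E s s = ContinuousLinearMap.id ℝ B)
    (hcomp : ∀ s t u : ℝ, 0 ≤ s → s ≤ t → t ≤ u → u ≤ T →
      ∀ g : B, E s u g = E s t (E t u g))
    (s : ℝ) (hs0 : 0 < s) (hsT : s < T) (f : B) (Af : ℝ → B)
    (hgen : ∀ u ∈ Ico s T,
      Tendsto (fun h : ℝ => h⁻¹ • (E u (u + h) f - f)) (𝓝[>] 0) (𝓝 (Af u))) :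
    ∀ t ∈ Ioo s T, HasDerivWithinAt (fun r => E s r f) (E s t (Af t)) (Ici t) t := by
  intro t ht
  have hst : s ≤ t := ht.1.le
  have htT : t < T := ht.2
  rw [hasDerivWithinAt_iff_tendsto_slope]
  have h1 : Ici t \ {t} = Ioi t := by
    ext x
    simp [lt_iff_le_and_ne, eq_comm]
  rw [h1]
  have hAf := hgen t ⟨hst, htT⟩
  have hsub : Tendsto (fun x : ℝ => x - t) (𝓝[>] t) (𝓝[>] 0) := by
    apply tendsto_nhdsWithin_of_tendsto_nhds_of_eventually_within
    · have : Tendsto (fun x : ℝ => x - t) (𝓝 t) (𝓝 (t - t)) :=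
        (continuous_id.sub continuous_const).tendsto t
      simpa using this.mono_left nhdsWithin_le_nhds
    · filter_upwards [self_mem_nhdsWithin] with x hx
      simpa [sub_pos] using hx
  have hcomp1 : Tendsto (fun x : ℝ => (E s t) ((x - t)⁻¹ • (E t x f - f)))
      (𝓝[>] t) (𝓝 (E s t (Af t))) := by
    have h0 := ((E s t).continuous.tendsto (Af t)).comp (hAf.comp hsub)
    refine h0.congr fun x => ?_
    simp [Function.comp, add_sub_cancel]
  refine hcomp1.congr' ?_
  have hT : Iio T ∈ 𝓝[>] t := nhdsWithin_le_nhds (Iio_mem_nhds htT)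
  filter_upwards [hT, self_mem_nhdsWithin] with x hxT hxt
  have hEx : E s x f = E s t (E t x f) :=
    hcomp s t x (le_of_lt hs0) hst (le_of_lt hxt) (le_of_lt hxT) f
  simp [slope_def_module, hEx, ← map_sub, map_smul]
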